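/- If $[a^b,a]=[a^c,a]=[a^b,a^c]=[b^a,b]=[(bc)^a,bc]=[c^b,c]=[c^{ba},c]=1$ in a group, then $[a,b,c]^{-1}=[a,c,b]$, where $[x,y,z]=[[x,y],z]$. -/

import Mathlib

open scoped commutatorElement

set_option maxHeartbeats 1000000 in
/-- If `[a^b,a] = [a^c,a] = [a^b,a^c] = [b^a,b] = [(bc)^a,bc] = [c^b,c] = [c^{ba},c] = 1`
in a group, then `[a,b,c]⁻¹ = [a,c,b]`, where `[x,y,z] = [[x,y],z]`,
`x^y = y x y⁻¹`, and `c^{ba} = (c^a)^b = b a c a⁻¹ b⁻¹`. -/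
theorem stmt_3 {G : Type*} [Group G] (a b c : G)
    (h1 : ⁅b * a * b⁻¹, a⁆ = 1)
    (h2 : ⁅c * a * c⁻¹, a⁆ = 1)
    (h3 : ⁅b * a * b⁻¹, c * a * c⁻¹⁆ = 1)
    (h4 : ⁅a * b * a⁻¹, b⁆ = 1)
    (h5 : ⁅a * (b * c) * a⁻¹, b * c⁆ = 1)
    (h6 : ⁅b * c * b⁻¹, c⁆ = 1)
    (h7 : ⁅b * a * c * a⁻¹ * b⁻¹, c⁆ = 1) :
    ⁅⁅a, b⁆, c⁆⁻¹ = ⁅⁅a, c⁆, b⁆ := by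
  rw [commutatorElement_eq_one_iff_mul_comm] at h1 h2 h3 h4 h5 h6 h7
  have C1 : Commute (b*a*b⁻¹) a := h1
  have C2 : Commute (c*a*c⁻¹) a := h2
  have C3 : Commute (b*a*b⁻¹) (c*a*c⁻¹) := h3
  have C6 : Commute (b*c*b⁻¹) c := h6
  -- u := a*b*a⁻¹*b⁻¹ commutes with b
  have db : (a*b*a⁻¹*b⁻¹)*b = b*(a*b*a⁻¹*b⁻¹) := by
    calc (a*b*a⁻¹*b⁻¹)*b = a*b*a⁻¹ := by group
    _ = (a*b*a⁻¹*b)*b⁻¹ := by group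
    _ = (b*(a*b*a⁻¹))*b⁻¹ := by rw [h4]
    _ = b*(a*b*a⁻¹*b⁻¹) := by group
  have Cub : Commute (a*b*a⁻¹*b⁻¹) b := db
  -- W := [a, b*c] commutes with b*c
  have dW : (a*b*c*a⁻¹*c⁻¹*b⁻¹)*(b*c) = (b*c)*(a*b*c*a⁻¹*c⁻¹*b⁻¹) := by
    calc (a*b*c*a⁻¹*c⁻¹*b⁻¹)*(b*c) = a*(b*c)*a⁻¹ := by group
    _ = (a*(b*c)*a⁻¹*(b*c))*(b*c)⁻¹ := by group
    _ = ((b*c)*(a*(b*c)*a⁻¹))*(b*c)⁻¹ := by rw [h5]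
    _ = (b*c)*(a*b*c*a⁻¹*c⁻¹*b⁻¹) := by group
  -- d4 : p^b = p*p*a⁻¹
  have d4 : b*(b*a*b⁻¹)*b⁻¹ = (b*a*b⁻¹)*(b*a*b⁻¹)*a⁻¹ := by
    calc b*(b*a*b⁻¹)*b⁻¹
        = (b*(a*b*a⁻¹*b⁻¹)⁻¹)*(a*b⁻¹) := by group
    _ = ((a*b*a⁻¹*b⁻¹)⁻¹*b)*(a*b⁻¹) := by rw [Cub.inv_left.eq]
    _ = (b*a*b⁻¹)*(a⁻¹*(b*a*b⁻¹)) := by group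
    _ = (b*a*b⁻¹)*((b*a*b⁻¹)*a⁻¹) := by rw [← C1.inv_right.eq]
    _ = (b*a*b⁻¹)*(b*a*b⁻¹)*a⁻¹ := by group
  -- d5a : u*v commutes with c*b
  have dW2 : (a*b*a⁻¹*b⁻¹)*b*(a*c*a⁻¹*c⁻¹)*c*b = b*c*(a*b*a⁻¹*b⁻¹)*b*(a*c*a⁻¹*c⁻¹) := by
    calc (a*b*a⁻¹*b⁻¹)*b*(a*c*a⁻¹*c⁻¹)*c*b
        = (a*b*c*a⁻¹*c⁻¹*b⁻¹*(b*c))*b := by group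
    _ = ((b*c)*(a*b*c*a⁻¹*c⁻¹*b⁻¹))*b := by rw [dW]
    _ = b*c*(a*b*a⁻¹*b⁻¹)*b*(a*c*a⁻¹*c⁻¹) := by group
  have d5a : ((a*b*a⁻¹*b⁻¹)*(a*c*a⁻¹*c⁻¹))*(c*b) = (c*b)*((a*b*a⁻¹*b⁻¹)*(a*c*a⁻¹*c⁻¹)) := by
    calc ((a*b*a⁻¹*b⁻¹)*(a*c*a⁻¹*c⁻¹))*(c*b)
        = b⁻¹*(b*(a*b*a⁻¹*b⁻¹)*(a*c*a⁻¹*c⁻¹)*c*b) := by group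
    _ = b⁻¹*((a*b*a⁻¹*b⁻¹)*b*(a*c*a⁻¹*c⁻¹)*c*b) := by rw [← db]
    _ = b⁻¹*(b*c*(a*b*a⁻¹*b⁻¹)*b*(a*c*a⁻¹*c⁻¹)) := by rw [dW2]
    _ = c*((a*b*a⁻¹*b⁻¹)*b)*(a*c*a⁻¹*c⁻¹) := by group
    _ = c*(b*(a*b*a⁻¹*b⁻¹))*(a*c*a⁻¹*c⁻¹) := by rw [db]
    _ = (c*b)*((a*b*a⁻¹*b⁻¹)*(a*c*a⁻¹*c⁻¹)) := by group
  have d5b : c*(b*((a*b*a⁻¹*b⁻¹)*(a*c*a⁻¹*c⁻¹))*b⁻¹)*c⁻¹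
      = (a*b*a⁻¹*b⁻¹)*(a*c*a⁻¹*c⁻¹) := by
    calc c*(b*((a*b*a⁻¹*b⁻¹)*(a*c*a⁻¹*c⁻¹))*b⁻¹)*c⁻¹
        = ((c*b)*((a*b*a⁻¹*b⁻¹)*(a*c*a⁻¹*c⁻¹)))*(c*b)⁻¹ := by group
    _ = (((a*b*a⁻¹*b⁻¹)*(a*c*a⁻¹*c⁻¹))*(c*b))*(c*b)⁻¹ := by rw [← d5a]
    _ = (a*b*a⁻¹*b⁻¹)*(a*c*a⁻¹*c⁻¹) := by group
  -- x1 : u*v = a*a*p⁻¹*q⁻¹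
  have x1 : (a*b*a⁻¹*b⁻¹)*(a*c*a⁻¹*c⁻¹) = a*a*(b*a*b⁻¹)⁻¹*(c*a*c⁻¹)⁻¹ := by
    calc (a*b*a⁻¹*b⁻¹)*(a*c*a⁻¹*c⁻¹)
        = a*((b*a*b⁻¹)⁻¹*a)*(c*a*c⁻¹)⁻¹ := by group
    _ = a*(a*(b*a*b⁻¹)⁻¹)*(c*a*c⁻¹)⁻¹ := by rw [C1.inv_left.eq]
    _ = a*a*(b*a*b⁻¹)⁻¹*(c*a*c⁻¹)⁻¹ := by group
  -- x2 : b*(a*a*p⁻¹*q⁻¹)*b⁻¹ = a*B⁻¹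
  have x2 : b*(a*a*(b*a*b⁻¹)⁻¹*(c*a*c⁻¹)⁻¹)*b⁻¹ = a*(b*(c*a*c⁻¹)*b⁻¹)⁻¹ := by
    calc b*(a*a*(b*a*b⁻¹)⁻¹*(c*a*c⁻¹)⁻¹)*b⁻¹
        = (b*a*b⁻¹)*(b*a*b⁻¹)*(b*(b*a*b⁻¹)*b⁻¹)⁻¹*(b*(c*a*c⁻¹)*b⁻¹)⁻¹ := by group
    _ = (b*a*b⁻¹)*(b*a*b⁻¹)*((b*a*b⁻¹)*(b*a*b⁻¹)*a⁻¹)⁻¹*(b*(c*a*c⁻¹)*b⁻¹)⁻¹ := by rw [d4]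
    _ = (b*a*b⁻¹)*((b*a*b⁻¹)*a)*(b*a*b⁻¹)⁻¹*(b*a*b⁻¹)⁻¹*(b*(c*a*c⁻¹)*b⁻¹)⁻¹ := by group
    _ = (b*a*b⁻¹)*(a*(b*a*b⁻¹))*(b*a*b⁻¹)⁻¹*(b*a*b⁻¹)⁻¹*(b*(c*a*c⁻¹)*b⁻¹)⁻¹ := by rw [h1]
    _ = ((b*a*b⁻¹)*a)*(b*a*b⁻¹)⁻¹*(b*(c*a*c⁻¹)*b⁻¹)⁻¹ := by group
    _ = (a*(b*a*b⁻¹))*(b*a*b⁻¹)⁻¹*(b*(c*a*c⁻¹)*b⁻¹)⁻¹ := by rw [h1]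
    _ = a*(b*(c*a*c⁻¹)*b⁻¹)⁻¹ := by group
  have e : c*(a*(b*(c*a*c⁻¹)*b⁻¹)⁻¹)*c⁻¹ = a*a*(b*a*b⁻¹)⁻¹*(c*a*c⁻¹)⁻¹ := by
    rw [x1, x2] at d5b; exact d5b
  -- d5 : c*B*c⁻¹ = (a*a*p⁻¹*q⁻¹)⁻¹ * q
  have d5 : c*(b*(c*a*c⁻¹)*b⁻¹)*c⁻¹ = (a*a*(b*a*b⁻¹)⁻¹*(c*a*c⁻¹)⁻¹)⁻¹*(c*a*c⁻¹) := by
    calc c*(b*(c*a*c⁻¹)*b⁻¹)*c⁻¹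
        = (c*(a*(b*(c*a*c⁻¹)*b⁻¹)⁻¹)*c⁻¹)⁻¹*(c*a*c⁻¹) := by group
    _ = (a*a*(b*a*b⁻¹)⁻¹*(c*a*c⁻¹)⁻¹)⁻¹*(c*a*c⁻¹) := by rw [e]
  -- d6 : v^b commutes with c
  have d6 : (b*a*c*a⁻¹*c⁻¹*b⁻¹)*c = c*(b*a*c*a⁻¹*c⁻¹*b⁻¹) := by
    calc (b*a*c*a⁻¹*c⁻¹*b⁻¹)*c
        = (b*a*c*a⁻¹*b⁻¹)*((b*c*b⁻¹)⁻¹*c) := by group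
    _ = (b*a*c*a⁻¹*b⁻¹)*(c*(b*c*b⁻¹)⁻¹) := by rw [C6.inv_left.eq]
    _ = ((b*a*c*a⁻¹*b⁻¹)*c)*(b*c*b⁻¹)⁻¹ := by group
    _ = (c*(b*a*c*a⁻¹*b⁻¹))*(b*c*b⁻¹)⁻¹ := by rw [h7]
    _ = c*(b*a*c*a⁻¹*c⁻¹*b⁻¹) := by group
  have d6' : c*(b*a*c*a⁻¹*c⁻¹*b⁻¹)*c⁻¹ = b*a*c*a⁻¹*c⁻¹*b⁻¹ := by
    calc c*(b*a*c*a⁻¹*c⁻¹*b⁻¹)*c⁻¹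
        = (c*(b*a*c*a⁻¹*c⁻¹*b⁻¹))*c⁻¹ := by group
    _ = ((b*a*c*a⁻¹*c⁻¹*b⁻¹)*c)*c⁻¹ := by rw [← d6]
    _ = b*a*c*a⁻¹*c⁻¹*b⁻¹ := by group
  -- d7 : A = v^b * (c*B*c⁻¹)
  have d7 : c*(b*a*b⁻¹)*c⁻¹
      = (b*a*c*a⁻¹*c⁻¹*b⁻¹)*((a*a*(b*a*b⁻¹)⁻¹*(c*a*c⁻¹)⁻¹)⁻¹*(c*a*c⁻¹)) := by
    calc c*(b*a*b⁻¹)*c⁻¹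
        = (c*(b*a*c*a⁻¹*c⁻¹*b⁻¹)*c⁻¹)*(c*(b*(c*a*c⁻¹)*b⁻¹)*c⁻¹) := by group
    _ = (b*a*c*a⁻¹*c⁻¹*b⁻¹)*(c*(b*(c*a*c⁻¹)*b⁻¹)*c⁻¹) := by rw [d6']
    _ = (b*a*c*a⁻¹*c⁻¹*b⁻¹)*((a*a*(b*a*b⁻¹)⁻¹*(c*a*c⁻¹)⁻¹)⁻¹*(c*a*c⁻¹)) := by rw [d5]
  -- d8 : B commutes with p
  have d8 : (b*(c*a*c⁻¹)*b⁻¹)*(b*a*b⁻¹) = (b*a*b⁻¹)*(b*(c*a*c⁻¹)*b⁻¹) := by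
    calc (b*(c*a*c⁻¹)*b⁻¹)*(b*a*b⁻¹) = b*((c*a*c⁻¹)*a)*b⁻¹ := by group
    _ = b*(a*(c*a*c⁻¹))*b⁻¹ := by rw [h2]
    _ = (b*a*b⁻¹)*(b*(c*a*c⁻¹)*b⁻¹) := by group
  have CBp : Commute (b*(c*a*c⁻¹)*b⁻¹) (b*a*b⁻¹) := d8
  -- d9 : B commutes with b*p*b⁻¹
  have d9 : (b*(c*a*c⁻¹)*b⁻¹)*(b*(b*a*b⁻¹)*b⁻¹) = (b*(b*a*b⁻¹)*b⁻¹)*(b*(c*a*c⁻¹)*b⁻¹) := by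
    calc (b*(c*a*c⁻¹)*b⁻¹)*(b*(b*a*b⁻¹)*b⁻¹) = b*((c*a*c⁻¹)*(b*a*b⁻¹))*b⁻¹ := by group
    _ = b*((b*a*b⁻¹)*(c*a*c⁻¹))*b⁻¹ := by rw [← h3]
    _ = (b*(b*a*b⁻¹)*b⁻¹)*(b*(c*a*c⁻¹)*b⁻¹) := by group
  have CBY : Commute (b*(c*a*c⁻¹)*b⁻¹) (b*(b*a*b⁻¹)*b⁻¹) := d9
  -- d10 : B commutes with a
  have d10 : (b*(c*a*c⁻¹)*b⁻¹)*a = a*(b*(c*a*c⁻¹)*b⁻¹) := by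
    calc (b*(c*a*c⁻¹)*b⁻¹)*a
        = (b*(c*a*c⁻¹)*b⁻¹)*((b*a*b⁻¹)*(b*a*b⁻¹)*a⁻¹)⁻¹*((b*a*b⁻¹)*(b*a*b⁻¹)) := by group
    _ = (b*(c*a*c⁻¹)*b⁻¹)*(b*(b*a*b⁻¹)*b⁻¹)⁻¹*((b*a*b⁻¹)*(b*a*b⁻¹)) := by rw [← d4]
    _ = ((b*(b*a*b⁻¹)*b⁻¹)⁻¹*(b*(c*a*c⁻¹)*b⁻¹))*((b*a*b⁻¹)*(b*a*b⁻¹)) := by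
          rw [CBY.inv_right.eq]
    _ = (b*(b*a*b⁻¹)*b⁻¹)⁻¹*((b*(c*a*c⁻¹)*b⁻¹)*((b*a*b⁻¹)*(b*a*b⁻¹))) := by group
    _ = (b*(b*a*b⁻¹)*b⁻¹)⁻¹*(((b*a*b⁻¹)*(b*a*b⁻¹))*(b*(c*a*c⁻¹)*b⁻¹)) := by
          rw [(CBp.mul_right CBp).eq]
    _ = ((b*a*b⁻¹)*(b*a*b⁻¹)*a⁻¹)⁻¹*(((b*a*b⁻¹)*(b*a*b⁻¹))*(b*(c*a*c⁻¹)*b⁻¹)) := by rw [d4]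
    _ = a*(b*(c*a*c⁻¹)*b⁻¹) := by group
  have CBa : Commute (b*(c*a*c⁻¹)*b⁻¹) a := d10
  -- final computation
  simp only [commutatorElement_def]
  calc (((a*b*a⁻¹*b⁻¹)*c*(a*b*a⁻¹*b⁻¹)⁻¹*c⁻¹))⁻¹
      = (c*a*c⁻¹)*(c*(b*a*b⁻¹)*c⁻¹)⁻¹*((b*a*b⁻¹)*a⁻¹) := by group
  _ = (c*a*c⁻¹)*((b*a*c*a⁻¹*c⁻¹*b⁻¹)*((a*a*(b*a*b⁻¹)⁻¹*(c*a*c⁻¹)⁻¹)⁻¹*(c*a*c⁻¹)))⁻¹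
        *((b*a*b⁻¹)*a⁻¹) := by rw [d7]
  _ = a*a*(b*a*b⁻¹)⁻¹*(c*a*c⁻¹)⁻¹*((b*(c*a*c⁻¹)*b⁻¹)*a⁻¹) := by
        group
        simp only [zpow_two, mul_assoc]
  _ = a*a*(b*a*b⁻¹)⁻¹*(c*a*c⁻¹)⁻¹*(a⁻¹*(b*(c*a*c⁻¹)*b⁻¹)) := by rw [CBa.inv_right.eq]
  _ = a*a*(b*a*b⁻¹)⁻¹*((c*a*c⁻¹)⁻¹*a⁻¹)*(b*(c*a*c⁻¹)*b⁻¹) := by group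
  _ = a*a*(b*a*b⁻¹)⁻¹*(a⁻¹*(c*a*c⁻¹)⁻¹)*(b*(c*a*c⁻¹)*b⁻¹) := by
        rw [C2.inv_left.inv_right.eq]
  _ = a*a*((b*a*b⁻¹)⁻¹*a⁻¹)*((c*a*c⁻¹)⁻¹*(b*(c*a*c⁻¹)*b⁻¹)) := by group
  _ = a*a*(a⁻¹*(b*a*b⁻¹)⁻¹)*((c*a*c⁻¹)⁻¹*(b*(c*a*c⁻¹)*b⁻¹)) := by
        rw [C1.inv_left.inv_right.eq]
  _ = a*((b*a*b⁻¹)⁻¹*(c*a*c⁻¹)⁻¹)*(b*(c*a*c⁻¹)*b⁻¹) := by group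
  _ = a*((c*a*c⁻¹)⁻¹*(b*a*b⁻¹)⁻¹)*(b*(c*a*c⁻¹)*b⁻¹) := by
        rw [C3.inv_left.inv_right.eq]
  _ = a*(c*a*c⁻¹)⁻¹*((b*a*b⁻¹)⁻¹*(b*(c*a*c⁻¹)*b⁻¹)) := by group
  _ = a*(c*a*c⁻¹)⁻¹*((b*(c*a*c⁻¹)*b⁻¹)*(b*a*b⁻¹)⁻¹) := by rw [CBp.inv_right.eq]
  _ = (a*c*a⁻¹*c⁻¹)*b*(a*c*a⁻¹*c⁻¹)⁻¹*b⁻¹ := by group
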